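/- For every ordinal α < ε₀, every a ∈ ℕ and every strictly increasing function f : ℕ → ℕ, there exists b ≥ a such that the set {f(a), f(a+1), ..., f(b)} is α-large. -/

import Mathlib

open ONote

/-- Append a term `ω^e·k` (allowing `k = 0`, in which case nothing is added)
in front of the notation `t`. -/
def appTerm (e : ONote) (k : ℕ) (t : ONote) : ONote :=
  if h : k = 0 then t else ONote.oadd e ⟨k, Nat.pos_of_ne_zero h⟩ t

/-- If the ordinal denoted by `e` is a successor `γ + 1`, return `some γ`;
otherwise (zero or limit) return `none`. -/
def spred : ONote → Option ONote
  | ONote.zero => none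
  | ONote.oadd e k a =>
    match a with
    | ONote.oadd e' k' a' => (spred (ONote.oadd e' k' a')).map (ONote.oadd e k)
    | ONote.zero =>
      if e = ONote.zero then some (appTerm ONote.zero ((k : ℕ) - 1) ONote.zero)
      else none

/-- The canonical fundamental sequences for ordinals below `ε₀`:
`0[n] = 0`, `(β + ω^0)[n] = β`, `(β + ω^{γ+1})[n] = β + ω^γ·n`, and
`(β + ω^λ)[n] = β + ω^{λ[n]}` for `λ` a limit. -/
def fund : ONote → ℕ → ONote
  | ONote.zero, _ => ONote.zero
  | ONote.oadd e k (ONote.oadd e' k' a'), n =>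
      ONote.oadd e k (fund (ONote.oadd e' k' a') n)
  | ONote.oadd e k ONote.zero, n =>
      if e = ONote.zero then appTerm ONote.zero ((k : ℕ) - 1) ONote.zero
      else
        match spred e with
        | some γ => appTerm e ((k : ℕ) - 1) (appTerm γ n ONote.zero)
        | none => appTerm e ((k : ℕ) - 1) (ONote.oadd (fund e n) 1 ONote.zero)

/-- The finite set listed (in increasing order) by `A` is `α`-large:
`α[a₀][a₁]…[a_b] = 0`. -/
def IsLarge (α : ONote) (A : List ℕ) : Prop :=
  A.foldl fund α = ONote.zero

section Aux

open Ordinal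

theorem nfBelow_appTerm {e t : ONote} {b : Ordinal} (k : ℕ) (he : NF e)
    (hlt : ONote.repr e < b) (ht : NFBelow t (ONote.repr e)) : NFBelow (appTerm e k t) b := by
  unfold appTerm
  split
  · exact ht.mono hlt.le
  · exact NFBelow.oadd he ht hlt

theorem repr_appTerm (e : ONote) (k : ℕ) (t : ONote) :
    ONote.repr (appTerm e k t) = ω ^ ONote.repr e * k + ONote.repr t := by
  unfold appTerm
  split
  · subst ‹k = 0›; simp
  · simp [ONote.repr]


theorem fund_oadd_oadd (e : ONote) (k : ℕ+) (e' : ONote) (k' : ℕ+) (a' : ONote) (n : ℕ) :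
    fund (ONote.oadd e k (ONote.oadd e' k' a')) n
      = ONote.oadd e k (fund (ONote.oadd e' k' a') n) := by
  rw [fund]

theorem fund_oadd_zero (e : ONote) (k : ℕ+) (n : ℕ) :
    fund (ONote.oadd e k ONote.zero) n =
      if e = ONote.zero then appTerm ONote.zero ((k : ℕ) - 1) ONote.zero
      else
        match spred e with
        | some γ => appTerm e ((k : ℕ) - 1) (appTerm γ n ONote.zero)
        | none => appTerm e ((k : ℕ) - 1) (ONote.oadd (fund e n) 1 ONote.zero) := by
  rw [fund]

theorem spred_nfBelow : ∀ {e : ONote} {b : Ordinal} {γ : ONote}, NFBelow e b →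
    spred e = some γ → NFBelow γ b ∧ ONote.repr γ + 1 = ONote.repr e
  | ONote.zero, b, γ, _, h => by simp [spred] at h
  | ONote.oadd e k (ONote.oadd e' k' a'), b, γ, hnf, h => by
    rw [spred] at h
    obtain ⟨γ', hγ', rfl⟩ := Option.map_eq_some_iff.1 h
    obtain ⟨h1, h2⟩ := spred_nfBelow hnf.snd hγ'
    refine ⟨NFBelow.oadd hnf.fst h1 hnf.lt, ?_⟩
    simp only [ONote.repr, add_assoc, h2]
  | ONote.oadd e k ONote.zero, b, γ, hnf, h => by
    rw [spred] at h
    split at h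
    · subst ‹e = ONote.zero›
      obtain rfl : appTerm ONote.zero ((k : ℕ) - 1) ONote.zero = γ := by
        simpa using h
      refine ⟨nfBelow_appTerm _ NF.zero hnf.lt NFBelow.zero, ?_⟩
      rw [repr_appTerm]
      have hk : (((k : ℕ) - 1 : ℕ) : Ordinal) + 1 = ((k : ℕ) : Ordinal) := by
        exact_mod_cast congrArg (fun m : ℕ => (m : Ordinal.{0})) (Nat.sub_add_cancel k.pos)
      simp only [ONote.repr, opow_zero, one_mul, add_zero]
      exact hk
    · exact absurd h (by simp)

theorem hk_cast (k : ℕ+) : ω ^ (b : Ordinal) * (((k : ℕ) - 1 : ℕ) : Ordinal) + ω ^ b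
    = ω ^ b * ((k : ℕ) : Ordinal) := by
  rw [← mul_add_one, ← Nat.cast_add_one, Nat.sub_add_cancel k.pos]

theorem fund_repr_lt : ∀ {α : ONote} (n : ℕ), NF α → α ≠ ONote.zero →
    ONote.repr (fund α n) < ONote.repr α
  | ONote.zero, n, _, h => absurd rfl h
  | ONote.oadd e k (ONote.oadd e' k' a'), n, hnf, _ => by
    rw [fund_oadd_oadd]
    have := fund_repr_lt n (hnf.snd'.fst.oadd k' hnf.snd'.snd) (by simp)
    simpa only [ONote.repr] using (add_lt_add_iff_left _).2 this
  | ONote.oadd e k ONote.zero, n, hnf, _ => by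
    rw [fund_oadd_zero]
    have hbound : ∀ x : Ordinal, x < ω ^ ONote.repr e →
        ω ^ ONote.repr e * (((k : ℕ) - 1 : ℕ) : Ordinal) + x
          < ONote.repr (ONote.oadd e k ONote.zero) := by
      intro x hx
      simp only [ONote.repr, add_zero]
      calc ω ^ ONote.repr e * (((k : ℕ) - 1 : ℕ) : Ordinal) + x
          < ω ^ ONote.repr e * (((k : ℕ) - 1 : ℕ) : Ordinal) + ω ^ ONote.repr e :=
            (add_lt_add_iff_left _).2 hx
        _ = ω ^ ONote.repr e * ((k : ℕ) : Ordinal) := hk_cast k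
    by_cases he0 : e = ONote.zero
    · subst he0
      rw [if_pos rfl, repr_appTerm]
      apply hbound
      simp [opow_pos _ omega0_pos]
    · rw [if_neg he0]
      have hnfe : NF e := hnf.fst
      cases hγ : spred e with
      | some γ =>
        simp only []
        obtain ⟨b', hb'⟩ := hnfe.out
        obtain ⟨h1, h2⟩ := spred_nfBelow hb' hγ
        rw [repr_appTerm, repr_appTerm]
        apply hbound
        simp only [ONote.repr, add_zero]
        calc ω ^ ONote.repr γ * (n : Ordinal) < ω ^ ONote.repr γ * ω :=
              (mul_lt_mul_iff_right₀ (opow_pos _ omega0_pos)).2 (nat_lt_omega0 n)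
          _ = ω ^ (ONote.repr γ + 1) := by rw [← opow_succ, add_one_eq_succ]
          _ = ω ^ ONote.repr e := by rw [h2]
      | none =>
        simp only []
        rw [repr_appTerm]
        apply hbound
        simp only [ONote.repr, add_zero, PNat.one_coe, Nat.cast_one,
          mul_one]
        exact (opow_lt_opow_iff_right one_lt_omega0).2
          (fund_repr_lt n hnfe he0)

theorem fund_nfBelow : ∀ {α : ONote} {b : Ordinal} (n : ℕ), NFBelow α b →
    NFBelow (fund α n) b
  | ONote.zero, b, n, _ => NFBelow.zero
  | ONote.oadd e k (ONote.oadd e' k' a'), b, n, hnf => by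
    rw [fund_oadd_oadd]
    exact NFBelow.oadd hnf.fst (fund_nfBelow n hnf.snd) hnf.lt
  | ONote.oadd e k ONote.zero, b, n, hnf => by
    rw [fund_oadd_zero]
    have hnfe : NF e := hnf.fst
    by_cases he0 : e = ONote.zero
    · subst he0
      rw [if_pos rfl]
      exact nfBelow_appTerm _ NF.zero hnf.lt NFBelow.zero
    · rw [if_neg he0]
      cases hγ : spred e with
      | some γ =>
        simp only []
        obtain ⟨b', hb'⟩ := hnfe.out
        obtain ⟨h1, h2⟩ := spred_nfBelow hb' hγ
        have hγe : ONote.repr γ < ONote.repr e := h2 ▸ lt_add_one _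
        refine nfBelow_appTerm _ hnfe hnf.lt (nfBelow_appTerm _ ?_ hγe NFBelow.zero)
        exact ⟨⟨b', h1⟩⟩
      | none =>
        simp only []
        have hne : e ≠ ONote.zero := he0
        have h1 : NF (fund e n) := by
          obtain ⟨b', hb'⟩ := hnfe.out
          exact ⟨⟨b', fund_nfBelow n hb'⟩⟩
        have h2 : ONote.repr (fund e n) < ONote.repr e := fund_repr_lt n hnfe hne
        exact nfBelow_appTerm _ hnfe hnf.lt (NFBelow.oadd h1 NFBelow.zero h2)

theorem fund_nf {α : ONote} (n : ℕ) (h : NF α) : NF (fund α n) := by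
  obtain ⟨b, hb⟩ := h.out
  exact ⟨⟨b, fund_nfBelow n hb⟩⟩

theorem range_map_cons (f : ℕ → ℕ) (a n : ℕ) :
    (List.range (n + 1)).map (fun i => f (a + i))
      = f a :: (List.range n).map (fun i => f (a + 1 + i)) := by
  rw [List.range_succ_eq_map, List.map_cons, List.map_map]
  simp only [add_zero]
  congr 1
  ext i
  simp [Function.comp, Nat.add_comm, Nat.add_assoc, Nat.add_left_comm]

end Aux

theorem exists_large_aux (f : ℕ → ℕ) : ∀ o : Ordinal, ∀ α : ONote, α.NF →
    ONote.repr α = o → ∀ a : ℕ, ∃ b : ℕ, a ≤ b ∧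
      IsLarge α (((List.range (b + 1 - a)).map (fun i => f (a + i)))) := by
  intro o
  induction o using Ordinal.induction with
  | h o IH =>
  intro α hα hr a
  by_cases h0 : α = ONote.zero
  · subst h0
    refine ⟨a, le_rfl, ?_⟩
    simp [IsLarge, Nat.succ_sub_one, List.range_succ_eq_map, fund]
  · subst hr
    have hlt : ONote.repr (fund α (f a)) < ONote.repr α := fund_repr_lt (f a) hα h0
    obtain ⟨b, hab, hL⟩ := IH (ONote.repr (fund α (f a))) hlt (fund α (f a))
      (fund_nf (f a) hα) rfl (a + 1)
    refine ⟨b, (Nat.le_succ a).trans hab, ?_⟩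
    have hsub : b + 1 - a = (b + 1 - (a + 1)) + 1 := by omega
    rw [IsLarge, hsub, range_map_cons, List.foldl_cons]
    exact hL

theorem exists_alpha_large_set (α : ONote) (hα : α.NF) (a : ℕ)
    (f : ℕ → ℕ) (hf : StrictMono f) :
    ∃ b : ℕ, a ≤ b ∧
      IsLarge α (((List.range (b + 1 - a)).map (fun i => f (a + i)))) :=
  exists_large_aux f (ONote.repr α) α hα rfl a
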